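/- arXiv:1007.4086 — 2 statements merged into one kernel-verified Lean document; each statement's English description precedes it below -/
import Mathlib

section
/- Let n ≥ 1 be an integer, let α > 0 and M > 1, and let f : ℝ^n → ℝ be continuously differentiable. Then for Lebesgue-almost every x ∈ ℝ^n, the function Θ_{α,M} ∘ f is differentiable at x and its gradient at x equals ∇f(x) if α ≤ |f(x)| ≤ Mα, and equals 0 otherwise. -/
open MeasureTheory Metric ENNReal

noncomputable section

/-- The Gaussian heat kernel `h_t(x) = (4πt)^{-n/2} exp(-‖x‖²/(4t))` on `ℝⁿ`. -/
def heatKernel (n : ℕ) (t : ℝ) (x : EuclideanSpace ℝ (Fin n)) : ℝ :=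
  (4 * Real.pi * t) ^ (-(n : ℝ) / 2) * Real.exp (-‖x‖ ^ 2 / (4 * t))

/-- The heat semigroup `H_t f (x) = (f ⋆ h_t)(x) = ∫ f(y) h_t(x-y) dy`. -/
def heatSG (n : ℕ) (f : EuclideanSpace ℝ (Fin n) → ℝ) (t : ℝ)
    (x : EuclideanSpace ℝ (Fin n)) : ℝ :=
  ∫ y, f y * heatKernel n t (x - y)

/-- Homogeneous Besov seminorm `‖f‖_{Ḃ^{-γ,∞}_∞} = sup_{t>0} t^{γ/2} ‖H_t f‖_{L^∞}`. -/
def besovNorm (n : ℕ) (γ : ℝ) (f : EuclideanSpace ℝ (Fin n) → ℝ) : ℝ≥0∞ :=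
  ⨆ (t : ℝ) (_ : 0 < t),
    ENNReal.ofReal (t ^ (γ / 2)) * ⨆ x, ENNReal.ofReal |heatSG n f t x|

/-- The Muckenhoupt `A₁` condition with constant `C`:
`(1/|B|)∫_B ω ≤ C ω(x)` for every open ball `B` and every `x ∈ B`. -/
def IsA1 (n : ℕ) (ω : EuclideanSpace ℝ (Fin n) → ℝ) (C : ℝ) : Prop :=
  ∀ (x z : EuclideanSpace ℝ (Fin n)) (r : ℝ), 0 < r → x ∈ ball z r →
    (volume (ball z r)).toReal⁻¹ * (∫ y in ball z r, ω y) ≤ C * ω x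

/-- The Muckenhoupt `A_p` condition (`1 < p < ∞`) with constant `C`. -/
def IsAp (n : ℕ) (p : ℝ) (ω : EuclideanSpace ℝ (Fin n) → ℝ) (C : ℝ) : Prop :=
  ∀ (z : EuclideanSpace ℝ (Fin n)) (r : ℝ), 0 < r →
    ((volume (ball z r)).toReal⁻¹ * ∫ y in ball z r, ω y) *
      ((volume (ball z r)).toReal⁻¹ * ∫ y in ball z r, ω y ^ (-(1 / (p - 1)))) ^ (p - 1) ≤ C

/-- The Laplacian `Δg(x) = ∑ᵢ ∂²g/∂xᵢ²(x)`. -/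
def lapl (n : ℕ) (g : EuclideanSpace ℝ (Fin n) → ℝ) (x : EuclideanSpace ℝ (Fin n)) : ℝ :=
  ∑ i : Fin n, fderiv ℝ (fun y => fderiv ℝ g y (EuclideanSpace.single i 1)) x
    (EuclideanSpace.single i 1)

/-- Fractional power `Λ^s f = (−Δ)^{s/2} f` via the Balakrishnan-type formula
`Λ^s f(x) = (1/Γ(1-s/2)) ∫₀^∞ t^{-s/2} (−Δ(H_t f))(x) dt`. -/
def fracLap (n : ℕ) (s : ℝ) (f : EuclideanSpace ℝ (Fin n) → ℝ)
    (x : EuclideanSpace ℝ (Fin n)) : ℝ :=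
  (Real.Gamma (1 - s / 2))⁻¹ *
    ∫ t in Set.Ioi (0 : ℝ), t ^ (-s / 2) * (-(lapl n (heatSG n f t) x))

/-- The potential `J^{-α/2} f(x) = (1/Γ(α/2)) ∫₀^∞ t^{α/2-1} H_t f(x) dt`. -/
def potential (n : ℕ) (α : ℝ) (f : EuclideanSpace ℝ (Fin n) → ℝ)
    (x : EuclideanSpace ℝ (Fin n)) : ℝ :=
  (Real.Gamma (α / 2))⁻¹ * ∫ t in Set.Ioi (0 : ℝ), t ^ (α / 2 - 1) * heatSG n f t x

/-- Uncentered Hardy–Littlewood maximal function. -/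
def maxFn (n : ℕ) (f : EuclideanSpace ℝ (Fin n) → ℝ) (x : EuclideanSpace ℝ (Fin n)) : ℝ≥0∞ :=
  ⨆ (z : EuclideanSpace ℝ (Fin n)) (r : ℝ) (_ : 0 < r) (_ : x ∈ ball z r),
    ENNReal.ofReal ((volume (ball z r)).toReal⁻¹ * ∫ y in ball z r, |f y|)

/-- The odd thresholding function `Θ_{α,M}`: it vanishes on `[0,α]`, equals `t - α` on
`[α, Mα]` and equals `(M-1)α` on `[Mα, ∞)`. -/
def theta (α M t : ℝ) : ℝ :=
  if 0 ≤ t then min (max (t - α) 0) ((M - 1) * α)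
  else -min (max (-t - α) 0) ((M - 1) * α)

section Aux

open Filter Asymptotics Topology

/-- Points of a level set where the derivative is nonzero form a countable set. -/
lemma countable_level_1d (g dg : ℝ → ℝ) (c : ℝ)
    (hg : ∀ t, HasDerivAt g (dg t) t) :
    Set.Countable {t | g t = c ∧ dg t ≠ 0} := by
  set S := {t | g t = c ∧ dg t ≠ 0} with hS
  have key : ∀ t ∈ S, ({t} : Set ℝ) ∈ 𝓝[S] t := by
    intro t ht
    have h1 : ∀ᶠ z in 𝓝[≠] t, g z ≠ g t := (hg t).eventually_ne ht.2
    rw [eventually_nhdsWithin_iff] at h1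
    have h2 : ∀ᶠ z in 𝓝[S] t, z ∈ ({t} : Set ℝ) := by
      rw [eventually_nhdsWithin_iff]
      filter_upwards [h1] with z hz hzS
      by_contra hne
      exact hz (by simpa using hne) (by rw [hzS.1, ht.1])
    exact h2
  obtain ⟨T, hTS, hTc, hST⟩ := TopologicalSpace.countable_cover_nhdsWithin key
  refine hTc.mono ?_
  simpa using hST

end Aux

section Aux2
open Filter Asymptotics Topology

lemma levelset_dir_null (m : ℕ) (f : EuclideanSpace ℝ (Fin (m + 1)) → ℝ)
    (hf : ContDiff ℝ 1 f) (c : ℝ) (i : Fin (m + 1)) :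
    volume {x | f x = c ∧ fderiv ℝ f x (EuclideanSpace.single i 1) ≠ 0} = 0 := by
  have hdf : Differentiable ℝ f := hf.differentiable one_ne_zero
  have hcont : Continuous fun x => fderiv ℝ f x (EuclideanSpace.single i 1) :=
    (hf.continuous_fderiv one_ne_zero).clm_apply continuous_const
  set A := {x | f x = c ∧ fderiv ℝ f x (EuclideanSpace.single i 1) ≠ 0} with hA
  have hAm : MeasurableSet A := by
    have : A = f ⁻¹' {c} ∩ (fun x => fderiv ℝ f x (EuclideanSpace.single i 1)) ⁻¹' ({0}ᶜ) := by
      ext x; simp [hA]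
    rw [this]
    exact ((isClosed_singleton.preimage hf.continuous).measurableSet).inter
      ((isOpen_compl_singleton.preimage hcont).measurableSet)
  set φ := (MeasurableEquiv.toLp 2 (Fin (m + 1) → ℝ)).symm with hφdef
  set ψ := MeasurableEquiv.piFinSuccAbove (fun _ : Fin (m + 1) => ℝ) i with hψdef
  set Φ := φ.trans ψ with hΦdef
  have hΦ : MeasurePreserving Φ volume
      ((volume : Measure ℝ).prod (volume : Measure (Fin m → ℝ))) := by
    rw [hΦdef, MeasurableEquiv.coe_trans]
    exact (volume_preserving_piFinSuccAbove (fun _ : Fin (m + 1) => ℝ) i).comp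
      (EuclideanSpace.volume_preserving_symm_measurableEquiv_toLp (Fin (m + 1)))
  set s := Φ.symm ⁻¹' A with hs
  have hsm : MeasurableSet s := Φ.symm.measurable hAm
  have hA' : A = Φ ⁻¹' s := by ext x; simp [hs]
  rw [hA', hΦ.measure_preimage hsm.nullMeasurableSet]
  rw [← Measure.prod_swap, Measure.map_apply measurable_swap hsm,
    Measure.measure_prod_null (measurable_swap hsm)]
  refine ae_of_all _ fun rest => ?_
  set e : EuclideanSpace ℝ (Fin (m + 1)) := EuclideanSpace.single i 1 with he
  set b : EuclideanSpace ℝ (Fin (m + 1)) := Φ.symm (0, rest) with hb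
  have hline : ∀ t : ℝ, Φ.symm (t, rest) = b + t • e := by
    intro t
    ext j
    have : Φ.symm (t, rest) = φ.symm (ψ.symm (t, rest)) := rfl
    have hb' : b = φ.symm (ψ.symm (0, rest)) := rfl
    rw [this, hb']
    show (φ.symm (ψ.symm (t, rest))) j = (φ.symm (ψ.symm (0, rest))) j + (t • e) j
    simp only [hψdef, MeasurableEquiv.piFinSuccAbove_symm_apply, hφdef,
      MeasurableEquiv.symm_symm, MeasurableEquiv.toLp_apply, PiLp.toLp_apply,
      PiLp.smul_apply, he, EuclideanSpace.single_apply, smul_eq_mul]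
    refine Fin.succAboveCases i ?_ ?_ j
    · simp [Fin.insertNth_apply_same]
    · intro k
      simp [Fin.insertNth_apply_succAbove, Fin.succAbove_ne i k]
  have hgd : ∀ t : ℝ, HasDerivAt (fun t : ℝ => f (b + t • e))
      (fderiv ℝ f (b + t • e) e) t := by
    intro t
    have h1 : HasDerivAt (fun t : ℝ => b + t • e) e t := by
      simpa using ((hasDerivAt_id t).smul_const e).const_add b
    exact (hdf (b + t • e)).hasFDerivAt.comp_hasDerivAt t h1
  have hslice : (Prod.mk rest ⁻¹' (Prod.swap ⁻¹' s))
      = {t : ℝ | f (b + t • e) = c ∧ fderiv ℝ f (b + t • e) e ≠ 0} := by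
    ext t
    have : (rest, t) ∈ Prod.swap ⁻¹' s ↔ Φ.symm (t, rest) ∈ A := Iff.rfl
    simp only [Set.mem_preimage, Set.mem_setOf_eq]
    rw [show Prod.swap (rest, t) = (t, rest) from rfl]
    change Φ.symm (t, rest) ∈ A ↔ _
    rw [hline t]
    exact Iff.rfl
  show volume (Prod.mk rest ⁻¹' (Prod.swap ⁻¹' s)) = 0
  rw [hslice]
  exact Set.Countable.measure_zero (countable_level_1d _ _ c hgd) _

lemma levelset_null (m : ℕ) (f : EuclideanSpace ℝ (Fin (m + 1)) → ℝ)
    (hf : ContDiff ℝ 1 f) (c : ℝ) :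
    volume {x | f x = c ∧ fderiv ℝ f x ≠ 0} = 0 := by
  refine measure_mono_null (fun x hx => ?_)
    (measure_iUnion_null fun i => levelset_dir_null m f hf c i)
  obtain ⟨h1, h2⟩ := hx
  have : ∃ i, fderiv ℝ f x (EuclideanSpace.single i 1) ≠ 0 := by
    by_contra h
    push_neg at h
    apply h2
    apply ContinuousLinearMap.coe_injective
    refine Module.Basis.ext (EuclideanSpace.basisFun (Fin (m + 1)) ℝ).toBasis fun i => ?_
    simpa [OrthonormalBasis.coe_toBasis, EuclideanSpace.basisFun_apply] using h i
  obtain ⟨i, hi⟩ := this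
  exact Set.mem_iUnion.2 ⟨i, ⟨h1, hi⟩⟩

end Aux2

section Theta
open Filter Asymptotics Topology

lemma theta_lipschitz {α M : ℝ} (hα : 0 < α) (hM : 1 < M) :
    LipschitzWith 2 (theta α M) := by
  set g : ℝ → ℝ := fun t => min (max (t - α) 0) ((M - 1) * α) with hg
  have h0 : (0:ℝ) ≤ (M - 1) * α := by nlinarith
  have hθ : theta α M = fun u => g u - g (-u) := by
    funext u
    rw [theta, hg]
    split_ifs with h
    · simp only [max_eq_right (by linarith : -u - α ≤ (0:ℝ)), min_eq_left h0, sub_zero]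
    · simp only [max_eq_right (by linarith : u - α ≤ (0:ℝ)), min_eq_left h0, zero_sub]
  have hgl : LipschitzWith 1 g := by
    simpa using ((LipschitzWith.id.sub (LipschitzWith.const α)).max_const 0).min_const
      ((M - 1) * α)
  have h2 : LipschitzWith 1 (fun u : ℝ => g (-u)) := by
    exact (hgl.comp LipschitzWith.id.neg).weaken (by norm_num)
  have h3 := hgl.sub h2
  rw [hθ]
  exact h3.weaken (by norm_num)

lemma theta_low {α M : ℝ} (hα : 0 < α) (hM : 1 < M) {t : ℝ} (h1 : -α < t) (h2 : t < α) :
    theta α M t = 0 := by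
  have h0 : (0:ℝ) ≤ (M - 1) * α := by nlinarith
  rw [theta]
  split_ifs with h
  · rw [max_eq_right (by linarith), min_eq_left h0]
  · rw [max_eq_right (by linarith), min_eq_left h0, neg_zero]

lemma theta_pos_mid {α M : ℝ} (hα : 0 < α) (hM : 1 < M) {t : ℝ} (h1 : α < t) (h2 : t < M * α) :
    theta α M t = t - α := by
  have hr : (M - 1) * α = M * α - α := by ring
  rw [theta, if_pos (by linarith), max_eq_left (by linarith), min_eq_left (by rw [hr]; linarith)]

lemma theta_pos_high {α M : ℝ} (hα : 0 < α) (hM : 1 < M) {t : ℝ} (h1 : M * α < t) :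
    theta α M t = (M - 1) * α := by
  have hMα : 0 < M * α := by nlinarith
  have hr : (M - 1) * α = M * α - α := by ring
  rw [theta, if_pos (by linarith), max_eq_left (by nlinarith),
    min_eq_right (by rw [hr]; linarith)]

lemma theta_neg_mid {α M : ℝ} (hα : 0 < α) (hM : 1 < M) {t : ℝ} (h1 : -(M * α) < t)
    (h2 : t < -α) : theta α M t = t + α := by
  have hr : (M - 1) * α = M * α - α := by ring
  rw [theta, if_neg (by push_neg; linarith), max_eq_left (by linarith),
    min_eq_left (by rw [hr]; linarith)]
  ring

lemma theta_neg_high {α M : ℝ} (hα : 0 < α) (hM : 1 < M) {t : ℝ} (h1 : t < -(M * α)) :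
    theta α M t = -((M - 1) * α) := by
  have hMα : 0 < M * α := by nlinarith
  have hr : (M - 1) * α = M * α - α := by ring
  rw [theta, if_neg (by push_neg; linarith), max_eq_left (by nlinarith),
    min_eq_right (by rw [hr]; linarith)]

lemma local_affine_case {m : ℕ} {f : EuclideanSpace ℝ (Fin (m + 1)) → ℝ}
    (hdf : Differentiable ℝ f) {x : EuclideanSpace ℝ (Fin (m + 1))} {α M a bb : ℝ}
    {U : Set ℝ} (hU : IsOpen U) (hfx : f x ∈ U)
    (hθU : ∀ t ∈ U, theta α M t = a * t + bb) :
    DifferentiableAt ℝ (fun y => theta α M (f y)) x ∧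
      fderiv ℝ (fun y => theta α M (f y)) x = a • fderiv ℝ f x := by
  have hmem : f ⁻¹' U ∈ 𝓝 x := (hdf.continuous.continuousAt).preimage_mem_nhds (hU.mem_nhds hfx)
  have hev : (fun y => theta α M (f y)) =ᶠ[𝓝 x] fun y => a * f y + bb :=
    Filter.eventually_of_mem hmem fun y hy => hθU (f y) hy
  have hda : DifferentiableAt ℝ (fun y => a * f y + bb) x := ((hdf x).const_mul a).add_const bb
  refine ⟨hda.congr_of_eventuallyEq hev, ?_⟩
  rw [hev.fderiv_eq, fderiv_add_const, fderiv_const_mul (hdf x)]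

end Theta

/-- **Thresholding lemma, part (3)**: for `f ∈ C¹(ℝⁿ)`, a.e. `x`, `Θ_{α,M} ∘ f` is
differentiable at `x` with derivative `∇f(x)` if `α ≤ |f(x)| ≤ Mα` and `0` otherwise. -/
theorem thresholding_chain_rule
    (n : ℕ) (hn : 1 ≤ n) (α M : ℝ) (hα : 0 < α) (hM : 1 < M)
    (f : EuclideanSpace ℝ (Fin n) → ℝ) (hf : ContDiff ℝ 1 f) :
    ∀ᵐ x ∂(volume : Measure (EuclideanSpace ℝ (Fin n))),
      DifferentiableAt ℝ (fun y => theta α M (f y)) x ∧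
      fderiv ℝ (fun y => theta α M (f y)) x =
        (if α ≤ |f x| ∧ |f x| ≤ M * α then fderiv ℝ f x else 0) := by

  obtain ⟨m, rfl⟩ : ∃ m, n = m + 1 := ⟨n - 1, by omega⟩
  have hdf : Differentiable ℝ f := hf.differentiable one_ne_zero
  have hMα : 0 < M * α := by nlinarith
  -- the bad set is null
  have hbadnull : volume {x : EuclideanSpace ℝ (Fin (m + 1)) |
      (f x = α ∨ f x = -α ∨ f x = M * α ∨ f x = -(M * α)) ∧ fderiv ℝ f x ≠ 0} = 0 := by
    have hsub : {x : EuclideanSpace ℝ (Fin (m + 1)) |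
        (f x = α ∨ f x = -α ∨ f x = M * α ∨ f x = -(M * α)) ∧ fderiv ℝ f x ≠ 0} ⊆
        {x | f x = α ∧ fderiv ℝ f x ≠ 0} ∪ ({x | f x = -α ∧ fderiv ℝ f x ≠ 0} ∪
        ({x | f x = M * α ∧ fderiv ℝ f x ≠ 0} ∪ {x | f x = -(M * α) ∧ fderiv ℝ f x ≠ 0})) := by
      rintro x ⟨(h | h | h | h), h2⟩
      · exact Or.inl ⟨h, h2⟩
      · exact Or.inr (Or.inl ⟨h, h2⟩)
      · exact Or.inr (Or.inr (Or.inl ⟨h, h2⟩))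
      · exact Or.inr (Or.inr (Or.inr ⟨h, h2⟩))
    refine measure_mono_null hsub ?_
    refine measure_union_null (levelset_null m f hf α) ?_
    refine measure_union_null (levelset_null m f hf (-α)) ?_
    exact measure_union_null (levelset_null m f hf (M * α)) (levelset_null m f hf (-(M * α)))
  have hbad : ∀ᵐ x ∂(volume : Measure (EuclideanSpace ℝ (Fin (m + 1)))),
      ¬((f x = α ∨ f x = -α ∨ f x = M * α ∨ f x = -(M * α)) ∧ fderiv ℝ f x ≠ 0) := by
    rw [ae_iff]
    simpa only [not_not] using hbadnull
  filter_upwards [hbad] with x hx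
  by_cases hxk : f x = α ∨ f x = -α ∨ f x = M * α ∨ f x = -(M * α)
  · -- kink values: here the derivative of f vanishes
    have h0 : fderiv ℝ f x = 0 := by
      by_contra h
      exact hx ⟨hxk, h⟩
    have hcond : α ≤ |f x| ∧ |f x| ≤ M * α := by
      rcases hxk with h | h | h | h <;> rw [h]
      · rw [abs_of_pos hα]; exact ⟨le_refl _, by nlinarith⟩
      · rw [abs_neg, abs_of_pos hα]; exact ⟨le_refl _, by nlinarith⟩
      · rw [abs_of_pos hMα]; exact ⟨by nlinarith, le_refl _⟩
      · rw [abs_neg, abs_of_pos hMα]; exact ⟨by nlinarith, le_refl _⟩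
    have hlittle : (fun y => f y - f x) =o[nhds x] fun y => y - x := by
      have h1 : HasFDerivAt f (0 : EuclideanSpace ℝ (Fin (m + 1)) →L[ℝ] ℝ) x :=
        h0 ▸ (hdf x).hasFDerivAt
      simpa using h1.isLittleO
    have hbig : (fun y => theta α M (f y) - theta α M (f x)) =O[nhds x]
        fun y => f y - f x := by
      refine (Asymptotics.isBigOWith_of_le' (c := 2) _ fun y => ?_).isBigO
      have := (theta_lipschitz hα hM).dist_le_mul (f y) (f x)
      rw [Real.dist_eq, Real.dist_eq] at this
      simpa [Real.norm_eq_abs] using this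
    have hD : HasFDerivAt (fun y => theta α M (f y))
        (0 : EuclideanSpace ℝ (Fin (m + 1)) →L[ℝ] ℝ) x := by
      exact HasFDerivAt.of_isLittleO (by simpa using hbig.trans_isLittleO hlittle)
    refine ⟨hD.differentiableAt, ?_⟩
    rw [hD.fderiv, if_pos hcond, h0]
  · push_neg at hxk
    obtain ⟨h1, h2, h3, h4⟩ := hxk
    rcases h4.lt_or_gt with hm | hm
    · -- f x < -(M * α)
      obtain ⟨hd, hfd⟩ := local_affine_case (a := 0) (bb := -((M - 1) * α)) hdf (isOpen_Iio (a := -(M * α))) hm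
        (fun t ht => by rw [theta_neg_high hα hM ht]; ring)
      refine ⟨hd, ?_⟩
      rw [hfd, if_neg, zero_smul]
      rintro ⟨-, hc2⟩
      rw [abs_of_neg (by nlinarith)] at hc2
      nlinarith
    · rcases h2.lt_or_gt with hm2 | hm2
      · -- -(M * α) < f x < -α
        obtain ⟨hd, hfd⟩ := local_affine_case (a := 1) (bb := α) hdf (isOpen_Ioo (a := -(M * α)) (b := -α))
          ⟨hm, hm2⟩ (fun t ht => by rw [theta_neg_mid hα hM ht.1 ht.2]; ring)
        refine ⟨hd, ?_⟩
        rw [hfd, if_pos, one_smul]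
        rw [abs_of_neg (by nlinarith)]
        exact ⟨by linarith, by linarith⟩
      · rcases h1.lt_or_gt with hm3 | hm3
        · -- -α < f x < α
          obtain ⟨hd, hfd⟩ := local_affine_case (a := 0) (bb := 0) hdf (isOpen_Ioo (a := -α) (b := α))
            ⟨hm2, hm3⟩ (fun t ht => by rw [theta_low hα hM ht.1 ht.2]; ring)
          refine ⟨hd, ?_⟩
          rw [hfd, if_neg, zero_smul]
          rintro ⟨hc1, -⟩
          exact absurd hc1 (not_le.2 (abs_lt.2 ⟨hm2, hm3⟩))
        · rcases h3.lt_or_gt with hm4 | hm4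
          · -- α < f x < M * α
            obtain ⟨hd, hfd⟩ := local_affine_case (a := 1) (bb := -α) hdf (isOpen_Ioo (a := α) (b := M * α))
              ⟨hm3, hm4⟩ (fun t ht => by rw [theta_pos_mid hα hM ht.1 ht.2]; ring)
            refine ⟨hd, ?_⟩
            rw [hfd, if_pos, one_smul]
            rw [abs_of_pos (by linarith)]
            exact ⟨hm3.le, hm4.le⟩
          · -- M * α < f x
            obtain ⟨hd, hfd⟩ := local_affine_case (a := 0) (bb := (M - 1) * α) hdf (isOpen_Ioi (a := M * α)) hm4
              (fun t ht => by rw [theta_pos_high hα hM ht]; ring)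
            refine ⟨hd, ?_⟩
            rw [hfd, if_neg, zero_smul]
            rintro ⟨-, hc2⟩
            rw [abs_of_pos (by nlinarith)] at hc2
            nlinarith
end
end

section
/- Let n ≥ 1 be an integer and let m : ℝ → ℂ be a Schwartz function. Define M_m : ℝ^n → ℂ by M_m(ξ) = m(‖ξ‖²). Then: (a) M_m is a Schwartz function on ℝ^n; (b) if moreover every derivative of m vanishes at the origin (m^{(k)}(0) = 0 for all k ≥ 0), then the inverse Fourier transform K = 𝓕^{−1} M_m, which is a Schwartz function on ℝ^n, has all vanishing moments: for every multi-index γ ∈ ℕ^n, ∫_{ℝ^n} x^γ K(x) dx = 0. -/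
open MeasureTheory Metric ENNReal

noncomputable section

open Real Complex SchwartzMap
open scoped FourierTransform RealInnerProductSpace

/-- If all derivatives of `m` vanish at `0`, then all iterated Fréchet derivatives of
`ξ ↦ m (‖ξ‖²)` vanish at the origin (Faà di Bruno bound at the single point `0`). -/
lemma flat_comp_normsq {n N : ℕ} (m : SchwartzMap ℝ ℂ)
    (hm : ∀ k : ℕ, iteratedDeriv k (m : ℝ → ℂ) 0 = 0) :
    iteratedFDeriv ℝ N (fun ξ : EuclideanSpace ℝ (Fin n) => m (‖ξ‖ ^ 2)) 0 = 0 := by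
  set q : EuclideanSpace ℝ (Fin n) → ℝ := fun ξ => ‖ξ‖ ^ 2 with hq_def
  set D : ℝ := 1 + ∑ i ∈ Finset.range (N + 1),
    ‖iteratedFDeriv ℝ i q (0 : EuclideanSpace ℝ (Fin n))‖ with hD_def
  have hsumnn : (0:ℝ) ≤ ∑ i ∈ Finset.range (N + 1),
      ‖iteratedFDeriv ℝ i q (0 : EuclideanSpace ℝ (Fin n))‖ :=
    Finset.sum_nonneg fun _ _ => norm_nonneg _
  have hD1 : (1:ℝ) ≤ D := by simp [hD_def, hsumnn]
  have hq : ContDiff ℝ (N : ℕ∞) q := contDiff_norm_sq ℝ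
  have hm' : ContDiff ℝ (N : ℕ∞) (m : ℝ → ℂ) := m.smooth N
  have hC : ∀ i, i ≤ N → ‖iteratedFDeriv ℝ i (m : ℝ → ℂ) (q 0)‖ ≤ 0 := by
    intro i _
    have h0 : q 0 = 0 := by simp [hq_def]
    rw [h0, norm_iteratedFDeriv_eq_norm_iteratedDeriv, hm i, norm_zero]
  have hD : ∀ i, 1 ≤ i → i ≤ N →
      ‖iteratedFDeriv ℝ i q (0 : EuclideanSpace ℝ (Fin n))‖ ≤ D ^ i := by
    intro i h1 h2
    have hle : ‖iteratedFDeriv ℝ i q (0 : EuclideanSpace ℝ (Fin n))‖ ≤ D := by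
      rw [hD_def]
      have := Finset.single_le_sum (f := fun j => ‖iteratedFDeriv ℝ j q
        (0 : EuclideanSpace ℝ (Fin n))‖) (fun _ _ => norm_nonneg _)
        (Finset.mem_range.2 (Nat.lt_succ_of_le h2))
      linarith
    calc ‖iteratedFDeriv ℝ i q (0 : EuclideanSpace ℝ (Fin n))‖ ≤ D := hle
      _ ≤ D ^ i := le_self_pow₀ hD1 (by omega)
  have key := norm_iteratedFDeriv_comp_le hm' hq le_rfl
    (0 : EuclideanSpace ℝ (Fin n)) hC hD
  have hnorm : ‖iteratedFDeriv ℝ N ((m : ℝ → ℂ) ∘ q) 0‖ ≤ 0 := by simpa using key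
  exact norm_le_zero_iff.mp hnorm

/-- The squared norm on Euclidean space has temperate growth. -/
lemma normsq_temperate (n : ℕ) :
    Function.HasTemperateGrowth (fun ξ : EuclideanSpace ℝ (Fin n) => ‖ξ‖ ^ 2) := by
  apply Function.HasTemperateGrowth.of_fderiv (k := 2) (C := 1)
  · set A : EuclideanSpace ℝ (Fin n) →L[ℝ] EuclideanSpace ℝ (Fin n) →L[ℝ] ℝ :=
      innerSL ℝ with hA
    have h : (fderiv ℝ (fun ξ : EuclideanSpace ℝ (Fin n) => ‖ξ‖ ^ 2)) =
        ⇑((2 : ℝ) • A) := by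
      funext x
      rw [(hasStrictFDerivAt_norm_sq x).hasFDerivAt.fderiv]
      ext y
      simp [hA, two_smul]
      rfl
    rw [h]
    exact ContinuousLinearMap.hasTemperateGrowth _
  · exact (contDiff_norm_sq ℝ (n := 1)).differentiable one_ne_zero
  · intro x
    have : ‖x‖ ^ 2 ≤ (1 + ‖x‖) ^ 2 := by nlinarith [norm_nonneg x]
    simpa [_root_.abs_of_nonneg (sq_nonneg ‖x‖)] using this

/-- The radial symbol `ξ ↦ m (‖ξ‖²)` as a Schwartz function on Euclidean space. -/
def radialSymbol (n : ℕ) (m : SchwartzMap ℝ ℂ) : SchwartzMap (EuclideanSpace ℝ (Fin n)) ℂ :=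
  SchwartzMap.compCLM (𝕜 := ℝ) (normsq_temperate n)
    ⟨1, 1, fun x => by
      have h1 : ‖(fun ξ : EuclideanSpace ℝ (Fin n) => ‖ξ‖ ^ 2) x‖ = ‖x‖ ^ 2 := by
        simp [_root_.abs_of_nonneg (sq_nonneg ‖x‖)]
      rw [h1]
      nlinarith [norm_nonneg x]⟩ m

lemma radialSymbol_apply (n : ℕ) (m : SchwartzMap ℝ ℂ) (ξ : EuclideanSpace ℝ (Fin n)) :
    radialSymbol n m ξ = m (‖ξ‖ ^ 2) := rfl

/-- Vanishing of all moments of the inverse Fourier transform of the radial symbol. -/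
lemma moments_vanish (n : ℕ) (m : SchwartzMap ℝ ℂ)
    (M : SchwartzMap (EuclideanSpace ℝ (Fin n)) ℂ)
    (hM : ⇑M = fun ξ : EuclideanSpace ℝ (Fin n) => m (‖ξ‖ ^ 2))
    (hflat : ∀ N : ℕ, iteratedFDeriv ℝ N
      (fun ξ : EuclideanSpace ℝ (Fin n) => m (‖ξ‖ ^ 2)) 0 = 0)
    (γ : Fin n → ℕ) :
    (∫ x : EuclideanSpace ℝ (Fin n), (∏ i, (x i : ℂ) ^ γ i) *
      ((SchwartzMap.fourierTransformCLE ℂ 𝓢(EuclideanSpace ℝ (Fin n), ℂ)).symm M) x) = 0 := by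
  set K : SchwartzMap (EuclideanSpace ℝ (Fin n)) ℂ :=
    (SchwartzMap.fourierTransformCLE ℂ 𝓢(EuclideanSpace ℝ (Fin n), ℂ)).symm M with hK
  set N : ℕ := ∑ i, γ i with hN
  have hFK : 𝓕 ⇑K = ⇑M := by
    have h1 : (SchwartzMap.fourierTransformCLE ℂ 𝓢(EuclideanSpace ℝ (Fin n), ℂ)) K = M :=
      (SchwartzMap.fourierTransformCLE ℂ 𝓢(EuclideanSpace ℝ (Fin n), ℂ)).apply_symm_apply M
    rw [← h1]
    rfl
  have hder := Real.iteratedFDeriv_fourier (f := ⇑K) (N := (N : ℕ∞))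
    (fun k _ => K.integrable_pow_mul volume k) K.continuous.aestronglyMeasurable le_rfl
  rw [hFK, hM] at hder
  have hint : Integrable (fun v => VectorFourier.fourierPowSMulRight (innerSL ℝ) (⇑K) v N)
      volume :=
    VectorFourier.integrable_fourierPowSMulRight _ (K.integrable_pow_mul volume N)
      K.continuous.aestronglyMeasurable
  have h0 : (𝓕 (fun v => VectorFourier.fourierPowSMulRight (innerSL ℝ) (⇑K) v N)) 0 = 0 := by
    rw [← hder, hflat N]
  have h1 : (∫ v, VectorFourier.fourierPowSMulRight (innerSL ℝ) (⇑K) v N) = 0 := by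
    rw [Real.fourier_eq] at h0
    simpa using h0
  let e : (Σ i : Fin n, Fin (γ i)) ≃ Fin N :=
    Fintype.equivFinOfCardEq (by simp [hN])
  let tup : Fin N → EuclideanSpace ℝ (Fin n) := fun j => EuclideanSpace.single (e.symm j).1 1
  have h2 := ContinuousMultilinearMap.integral_apply hint tup
  rw [h1] at h2
  have h3 : ∫ v, (VectorFourier.fourierPowSMulRight (innerSL ℝ) (⇑K) v N) tup = 0 :=
    h2.symm.trans (by simp)
  simp only [VectorFourier.fourierPowSMulRight_apply] at h3
  rw [integral_smul] at h3
  have hne : ((- (2 * Real.pi * Complex.I)) ^ N : ℂ) ≠ 0 := by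
    apply pow_ne_zero
    simp [Real.pi_ne_zero, Complex.I_ne_zero, Complex.ext_iff, Real.pi_ne_zero]
  have h4 : (∫ v : EuclideanSpace ℝ (Fin n), (∏ j, (innerSL ℝ) v (tup j)) • K v) = 0 :=
    (smul_eq_zero.mp h3).resolve_left hne
  have hprod : ∀ v : EuclideanSpace ℝ (Fin n),
      ((∏ j, (innerSL ℝ) v (tup j) : ℝ) : ℂ) = ∏ i, (v i : ℂ) ^ γ i := by
    intro v
    have e1 : ∀ j, (innerSL ℝ) v (tup j) = v (e.symm j).1 := by
      intro j
      simp [tup, EuclideanSpace.inner_single_right]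
    have e2 : (∏ j, (innerSL ℝ) v (tup j) : ℝ) = ∏ i, (v i) ^ γ i := by
      simp_rw [e1]
      rw [Equiv.prod_comp e.symm (fun p : (Σ i : Fin n, Fin (γ i)) => v p.1)]
      rw [← Finset.univ_sigma_univ, Finset.prod_sigma]
      simp
    rw [e2]
    push_cast
    rfl
  rw [← h4]
  apply integral_congr_ae
  filter_upwards with v
  rw [← hprod v]
  rw [Complex.real_smul]

/-- **Corollary 5.1 on `ℝⁿ`**: for a Schwartz function `m : ℝ → ℂ`, the radial symbol
`M_m(ξ) = m(‖ξ‖²)` is a Schwartz function on `ℝⁿ`; and if all derivatives of `m` vanish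
at the origin, then the kernel `K = 𝓕⁻¹ M_m` is a Schwartz function all of whose moments
vanish: `∫ x^γ K(x) dx = 0` for every multi-index `γ`. -/
theorem radial_symbol_schwartz_and_vanishing_moments
    (n : ℕ) (hn : 1 ≤ n) (m : SchwartzMap ℝ ℂ) :
    (∃ M : SchwartzMap (EuclideanSpace ℝ (Fin n)) ℂ, ∀ ξ, M ξ = m (‖ξ‖ ^ 2)) ∧
    ((∀ k : ℕ, iteratedDeriv k (m : ℝ → ℂ) 0 = 0) →
      ∃ K : SchwartzMap (EuclideanSpace ℝ (Fin n)) ℂ,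
        (∀ x, K x = FourierTransformInv.fourierInv (fun ξ : EuclideanSpace ℝ (Fin n) => m (‖ξ‖ ^ 2)) x) ∧
        ∀ γ : Fin n → ℕ, (∫ x : EuclideanSpace ℝ (Fin n),
            (∏ i, (x i : ℂ) ^ γ i) * K x) = 0) := by
  constructor
  · exact ⟨radialSymbol n m, radialSymbol_apply n m⟩
  · intro hflat
    refine ⟨(SchwartzMap.fourierTransformCLE ℂ 𝓢(EuclideanSpace ℝ (Fin n), ℂ)).symm (radialSymbol n m), ?_, ?_⟩
    · intro x
      have h := FourierTransform.fourierCLE_symm_apply (R := ℂ) (E := 𝓢(EuclideanSpace ℝ (Fin n), ℂ)) (radialSymbol n m)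
      have hx := DFunLike.congr_fun h x
      have hfun : ⇑(radialSymbol n m) = fun ξ : EuclideanSpace ℝ (Fin n) => m (‖ξ‖ ^ 2) := rfl
      rw [SchwartzMap.fourierInv_coe, hfun] at hx
      exact hx
    · intro γ
      exact moments_vanish n m (radialSymbol n m) rfl
        (fun N => flat_comp_normsq m hflat) γ
end
end
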